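/- For any nonzero positive semi-definite matrix Σ, defining ρ₂(Σ²) := tr(Σ²)²/tr(Σ⁴) and ρ₃(Σ) := tr(Σ²)³/tr(Σ³)², one has √ρ₃(Σ) ≤ ρ₂(Σ²) ≤ ρ₃(Σ). -/

import Mathlib

open Matrix Finset in
private lemma trace_pow_eq_sum {d : ℕ} {A : Matrix (Fin d) (Fin d) ℝ}
    (hA : A.IsHermitian) (k : ℕ) :
    (A ^ k).trace = ∑ i, hA.eigenvalues i ^ k := by
  set U : Matrix (Fin d) (Fin d) ℝ := (hA.eigenvectorUnitary : Matrix (Fin d) (Fin d) ℝ)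
  have hU1 : U * star U = 1 := Matrix.mem_unitaryGroup_iff.mp hA.eigenvectorUnitary.2
  have hU2 : star U * U = 1 := Matrix.mem_unitaryGroup_iff'.mp hA.eigenvectorUnitary.2
  set D : Matrix (Fin d) (Fin d) ℝ := diagonal (RCLike.ofReal ∘ hA.eigenvalues)
  have hpow : A ^ k = U * D ^ k * star U := by
    induction k with
    | zero => simp [hU1]
    | succ n ih =>
      rw [pow_succ, ih, hA.spectral_theorem, Unitary.conjStarAlgAut_apply, pow_succ]
      simp only [Matrix.mul_assoc]
      rw [← Matrix.mul_assoc (star U) U, hU2, Matrix.one_mul]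
  rw [hpow, Matrix.trace_mul_cycle, hU2, Matrix.one_mul]
  simp [D, Matrix.diagonal_pow, Matrix.trace_diagonal]

/-- For any nonzero positive semi-definite matrix `Σ`, with
`ρ₂(Σ²) := tr(Σ²)²/tr(Σ⁴)` and `ρ₃(Σ) := tr(Σ²)³/tr(Σ³)²`, one has
`√ρ₃(Σ) ≤ ρ₂(Σ²) ≤ ρ₃(Σ)`. -/
theorem stmt_2 {d : ℕ} (A : Matrix (Fin d) (Fin d) ℝ)
    (hA : A.PosSemidef) (hA0 : A ≠ 0) :
    Real.sqrt (((A ^ 2).trace) ^ 3 / ((A ^ 3).trace) ^ 2)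
        ≤ ((A ^ 2).trace) ^ 2 / (A ^ 4).trace ∧
      ((A ^ 2).trace) ^ 2 / (A ^ 4).trace
        ≤ ((A ^ 2).trace) ^ 3 / ((A ^ 3).trace) ^ 2 := by
  classical
  have hH := hA.1
  set lam := hH.eigenvalues with hlam
  have hnn : ∀ i, 0 ≤ lam i := fun i => hA.eigenvalues_nonneg i
  -- a nonzero eigenvalue exists
  have hlne : lam ≠ 0 := by
    contrapose! hA0
    have := hH.spectral_theorem
    rw [hlam] at hA0
    rwa [hA0, Pi.comp_zero, RCLike.ofReal_zero,
      (by rfl : Function.const (Fin d) (0 : ℝ) = fun _ ↦ 0),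
      Matrix.diagonal_zero, Unitary.conjStarAlgAut_apply, mul_zero, zero_mul] at this
  obtain ⟨i₀, hi₀⟩ := Function.ne_iff.mp hlne
  have hi₀pos : 0 < lam i₀ := lt_of_le_of_ne (hnn i₀) (Ne.symm hi₀)
  set s2 := ∑ i, lam i ^ 2 with hs2
  set s3 := ∑ i, lam i ^ 3 with hs3
  set s4 := ∑ i, lam i ^ 4 with hs4
  have ht2 : (A ^ 2).trace = s2 := trace_pow_eq_sum hH 2
  have ht3 : (A ^ 3).trace = s3 := trace_pow_eq_sum hH 3
  have ht4 : (A ^ 4).trace = s4 := trace_pow_eq_sum hH 4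
  have hs2pos : 0 < s2 :=
    Finset.sum_pos' (fun i _ => pow_nonneg (hnn i) 2)
      ⟨i₀, Finset.mem_univ _, pow_pos hi₀pos 2⟩
  have hs3pos : 0 < s3 :=
    Finset.sum_pos' (fun i _ => pow_nonneg (hnn i) 3)
      ⟨i₀, Finset.mem_univ _, pow_pos hi₀pos 3⟩
  have hs4pos : 0 < s4 :=
    Finset.sum_pos' (fun i _ => pow_nonneg (hnn i) 4)
      ⟨i₀, Finset.mem_univ _, pow_pos hi₀pos 4⟩
  -- Cauchy–Schwarz : s3² ≤ s2 * s4
  have hCS : s3 ^ 2 ≤ s2 * s4 := by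
    have h := Finset.sum_mul_sq_le_sq_mul_sq Finset.univ lam (fun i => lam i ^ 2)
    calc s3 ^ 2 = (∑ i, lam i * lam i ^ 2) ^ 2 := by
          rw [hs3]; congr 1; exact Finset.sum_congr rfl fun i _ => by ring
      _ ≤ (∑ i, lam i ^ 2) * ∑ i, (lam i ^ 2) ^ 2 := h
      _ = s2 * s4 := by
          rw [hs2, hs4]; congr 1; exact Finset.sum_congr rfl fun i _ => by ring
  -- max eigenvalue bound : s4² ≤ s2 * s3²
  have hmax : s4 ^ 2 ≤ s2 * s3 ^ 2 := by
    have hne : (Finset.univ : Finset (Fin d)).Nonempty := ⟨i₀, Finset.mem_univ _⟩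
    set M := Finset.univ.sup' hne lam with hM
    have hMmem : ∃ j, M = lam j := by
      obtain ⟨j, _, hj⟩ := Finset.exists_mem_eq_sup' hne lam
      exact ⟨j, hj⟩
    obtain ⟨j, hj⟩ := hMmem
    have hMnn : 0 ≤ M := hj ▸ hnn j
    have hM2 : M ^ 2 ≤ s2 := by
      rw [hj, hs2]
      exact Finset.single_le_sum (fun i _ => pow_nonneg (hnn i) 2) (Finset.mem_univ j)
    have h43 : s4 ≤ M * s3 := by
      rw [hs4, hs3, Finset.mul_sum]
      refine Finset.sum_le_sum fun i _ => ?_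
      have hle : lam i ≤ M := Finset.le_sup' lam (Finset.mem_univ i)
      calc lam i ^ 4 = lam i * lam i ^ 3 := by ring
        _ ≤ M * lam i ^ 3 := by
            exact mul_le_mul_of_nonneg_right hle (pow_nonneg (hnn i) 3)
    nlinarith [hs3pos, hs4pos, hMnn]
  rw [ht2, ht3, ht4]
  constructor
  · have hy : 0 ≤ s2 ^ 2 / s4 := by positivity
    have hx : s2 ^ 3 / s3 ^ 2 ≤ (s2 ^ 2 / s4) ^ 2 := by
      rw [div_pow, div_le_div_iff₀ (pow_pos hs3pos 2) (pow_pos hs4pos 2)]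
      nlinarith [hmax, hs2pos, sq_nonneg s2]
    calc Real.sqrt (s2 ^ 3 / s3 ^ 2) ≤ Real.sqrt ((s2 ^ 2 / s4) ^ 2) :=
          Real.sqrt_le_sqrt hx
      _ = s2 ^ 2 / s4 := Real.sqrt_sq hy
  · rw [div_le_div_iff₀ hs4pos (pow_pos hs3pos 2)]
    nlinarith [hs2pos, hCS]
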